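/- Let Γ be a discrete subgroup of Sp(n,ℝ), i.e. a subgroup such that Γ ∩ K is finite for every compact subset K of Sp(n,ℝ). Then Γ acts properly discontinuously on the Siegel upper half plane H_n: for any two compact subsets C₁ and C₂ of H_n, the set { γ ∈ Γ : (γ·C₁) ∩ C₂ ≠ ∅ } is finite, where γ·Ω = (AΩ+B)(CΩ+D)^{-1} for γ = [[A,B],[C,D]]. -/

import Mathlib

open Matrix Complex
set_option maxHeartbeats 1000000

lemma box_compact {m : Type} [Fintype m] (r : ℝ) :
    IsCompact {γ : Matrix m m ℝ | ∀ i j, |γ i j| ≤ r} := by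
  have h : {γ : Matrix m m ℝ | ∀ i j, |γ i j| ≤ r} =
      Set.pi Set.univ (fun _ : m => Set.pi Set.univ fun _ : m => Set.Icc (-r) r) := by
    ext γ
    constructor
    · intro h i _ j _
      exact abs_le.mp (h i j)
    · intro h i j
      exact abs_le.mpr (h i (Set.mem_univ i) j (Set.mem_univ j))
  rw [h]
  exact isCompact_univ_pi fun _ => isCompact_univ_pi fun _ => isCompact_Icc

lemma entry_cont {n : ℕ} (i j : Fin n) :
    Continuous fun Ω : Matrix (Fin n) (Fin n) ℂ => Ω i j :=
  (continuous_apply j).comp (continuous_apply i)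

lemma entry_bound {n : ℕ} (C : Set (Matrix (Fin n) (Fin n) ℂ)) (hC : IsCompact C) :
    ∃ R : ℝ, 0 < R ∧ ∀ Ω ∈ C, ∀ i j, ‖Ω i j‖ ≤ R := by
  have hgc : Continuous fun Ω : Matrix (Fin n) (Fin n) ℂ => ∑ i, ∑ j, ‖Ω i j‖ := by
    apply continuous_finset_sum
    intro i _
    apply continuous_finset_sum
    intro j _
    exact continuous_norm.comp (entry_cont i j)
  obtain ⟨R, hR⟩ := (hC.image hgc).bddAbove
  refine ⟨max R 1, lt_of_lt_of_le one_pos (le_max_right _ _), fun Ω hΩ i j => ?_⟩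
  have h1 : ∑ i, ∑ j, ‖Ω i j‖ ≤ R := hR (Set.mem_image_of_mem _ hΩ)
  have h2a : ‖Ω i j‖ ≤ ∑ j', ‖Ω i j'‖ :=
    Finset.single_le_sum (fun _ _ => norm_nonneg _) (Finset.mem_univ j)
  have h2b : ∑ j', ‖Ω i j'‖ ≤ ∑ i', ∑ j', ‖Ω i' j'‖ :=
    Finset.single_le_sum (fun (k : Fin n) _ => Finset.sum_nonneg fun _ _ => norm_nonneg _)
      (Finset.mem_univ i)
  exact le_trans (le_trans h2a (le_trans h2b h1)) (le_max_left _ _)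

lemma eps_bound {n : ℕ} (hn : 0 < n) (C : Set (Matrix (Fin n) (Fin n) ℂ)) (hC : IsCompact C)
    (hne : C.Nonempty)
    (hH : ∀ Ω ∈ C, (Matrix.of fun i j => (Ω i j).im).PosDef) :
    ∃ ε : ℝ, 0 < ε ∧ ∀ Ω ∈ C, ∀ v : Fin n → ℝ,
      ε * (∑ i, v i ^ 2) ≤ ∑ i, ∑ j, v i * (Ω i j).im * v j := by
  classical
  set T : Set (Fin n → ℝ) := {v | ∑ i, v i ^ 2 = 1} with hT
  have hTc : IsCompact T := by
    have hsub : T ⊆ Set.pi Set.univ (fun _ : Fin n => Set.Icc (-1 : ℝ) 1) := by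
      intro v hv i _
      have h1 : v i ^ 2 ≤ 1 := by
        rw [← hv]
        exact Finset.single_le_sum (fun k _ => sq_nonneg (v k)) (Finset.mem_univ i)
      exact Set.mem_Icc.mpr (abs_le.mp (abs_le_one_iff_mul_self_le_one.mpr (by nlinarith)))
    have hcl : IsClosed T := by
      apply isClosed_eq
      · exact continuous_finset_sum _ fun i _ => (continuous_apply i).pow 2
      · exact continuous_const
    exact (isCompact_univ_pi fun _ => isCompact_Icc).of_isClosed_subset hcl hsub
  have hTne : T.Nonempty := by
    refine ⟨Pi.single ⟨0, hn⟩ 1, ?_⟩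
    simp [hT, Pi.single_apply]
  have hf : Continuous fun p : Matrix (Fin n) (Fin n) ℂ × (Fin n → ℝ) =>
      ∑ i, ∑ j, p.2 i * (p.1 i j).im * p.2 j := by
    apply continuous_finset_sum
    intro i _
    apply continuous_finset_sum
    intro j _
    exact (((continuous_apply i).comp continuous_snd).mul
      (Complex.continuous_im.comp ((continuous_apply j).comp ((continuous_apply i).comp
        continuous_fst)))).mul ((continuous_apply j).comp continuous_snd)
  obtain ⟨⟨Ω₀, v₀⟩, hmem, hmin⟩ := (hC.prod hTc).exists_isMinOn (hne.prod hTne) hf.continuousOn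
  have hv₀T : v₀ ∈ T := hmem.2
  have hv₀ : v₀ ≠ 0 := by
    intro h
    rw [hT] at hv₀T
    simp [h] at hv₀T
  set ε : ℝ := ∑ i, ∑ j, v₀ i * (Ω₀ i j).im * v₀ j with hε
  have hεpos : 0 < ε := by
    have := (hH Ω₀ hmem.1).dotProduct_mulVec_pos hv₀
    simpa [hε, dotProduct, Matrix.mulVec, Finset.mul_sum, mul_assoc] using this
  refine ⟨ε, hεpos, fun Ω hΩ v => ?_⟩
  by_cases hv : ∑ i, v i ^ 2 = 0
  · have hv0 : ∀ i, v i = 0 := by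
      intro i
      have := (Finset.sum_eq_zero_iff_of_nonneg (fun k _ => sq_nonneg (v k))).mp hv i
        (Finset.mem_univ i)
      exact pow_eq_zero_iff (by norm_num) |>.mp this
    simp [hv, hv0]
  · have hspos : 0 < ∑ i, v i ^ 2 :=
      lt_of_le_of_ne (Finset.sum_nonneg fun k _ => sq_nonneg (v k)) (Ne.symm hv)
    set s : ℝ := Real.sqrt (∑ i, v i ^ 2) with hs
    have hspos' : 0 < s := Real.sqrt_pos.mpr hspos
    have hs2 : s ^ 2 = ∑ i, v i ^ 2 := Real.sq_sqrt hspos.le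
    have huT : (fun i => s⁻¹ * v i) ∈ T := by
      rw [hT]
      have : ∑ i, (s⁻¹ * v i) ^ 2 = s⁻¹ ^ 2 * ∑ i, v i ^ 2 := by
        rw [Finset.mul_sum]; congr 1; ext i; ring
      simp only [Set.mem_setOf_eq, this, ← hs2]
      field_simp
    have hle : ε ≤ ∑ i, ∑ j, (s⁻¹ * v i) * (Ω i j).im * (s⁻¹ * v j) :=
      hmin (Set.mk_mem_prod hΩ huT)
    have hsum : ∑ i, ∑ j, (s⁻¹ * v i) * (Ω i j).im * (s⁻¹ * v j)
        = s⁻¹ ^ 2 * ∑ i, ∑ j, v i * (Ω i j).im * v j := by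
      rw [Finset.mul_sum]
      congr 1; ext i
      rw [Finset.mul_sum]
      congr 1; ext j
      ring
    rw [hsum] at hle
    have := mul_le_mul_of_nonneg_right hle hspos.le
    calc ε * ∑ i, v i ^ 2 ≤ s⁻¹ ^ 2 * (∑ i, ∑ j, v i * (Ω i j).im * v j) * (∑ i, v i ^ 2) := this
      _ = (s⁻¹ ^ 2 * s ^ 2) * (∑ i, ∑ j, v i * (Ω i j).im * v j) := by rw [hs2]; ring
      _ = ∑ i, ∑ j, v i * (Ω i j).im * v j := by
          rw [inv_pow, inv_mul_cancel₀ (by positivity)]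
          ring

lemma quad_complex {n : ℕ} {ε : ℝ} {Y : Fin n → Fin n → ℝ}
    (h : ∀ v : Fin n → ℝ, ε * (∑ i, v i ^ 2) ≤ ∑ i, ∑ j, v i * Y i j * v j)
    (x : Fin n → ℂ) :
    ε * (∑ i, Complex.normSq (x i)) ≤
      (∑ i, ∑ j, (starRingEnd ℂ) (x i) * (Y i j : ℂ) * x j).re := by
  have hre : ∀ i j, ((starRingEnd ℂ) (x i) * (Y i j : ℂ) * x j).re
      = (x i).re * Y i j * (x j).re + (x i).im * Y i j * (x j).im := by
    intro i j
    simp only [Complex.mul_re, Complex.mul_im, Complex.ofReal_re, Complex.ofReal_im,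
      Complex.conj_re, Complex.conj_im]
    ring
  have hsplit : (∑ i, ∑ j, (starRingEnd ℂ) (x i) * (Y i j : ℂ) * x j).re
      = (∑ i, ∑ j, (x i).re * Y i j * (x j).re) + (∑ i, ∑ j, (x i).im * Y i j * (x j).im) := by
    rw [Complex.re_sum, ← Finset.sum_add_distrib]
    congr 1; ext i
    rw [Complex.re_sum, ← Finset.sum_add_distrib]
    congr 1; ext j
    exact hre i j
  have h1 := h fun i => (x i).re
  have h2 := h fun i => (x i).im
  have hnsq : ∀ i, Complex.normSq (x i) = (x i).re ^ 2 + (x i).im ^ 2 := by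
    intro i; rw [Complex.normSq_apply]; ring
  rw [hsplit]
  calc ε * ∑ i, Complex.normSq (x i)
      = ε * (∑ i, (x i).re ^ 2) + ε * (∑ i, (x i).im ^ 2) := by
        simp only [hnsq, Finset.sum_add_distrib]; ring
    _ ≤ _ := add_le_add h1 h2

lemma inv_entry_bound {n : ℕ} {ε : ℝ} (hε : 0 < ε) (Y : Matrix (Fin n) (Fin n) ℝ)
    (hq : ∀ v : Fin n → ℝ, ε * (∑ i, v i ^ 2) ≤ ∑ i, ∑ j, v i * Y i j * v j)
    (hdet : IsUnit Y.det) :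
    ∀ i j, |Y⁻¹ i j| ≤ 1 / ε := by
  intro i j
  set w : Fin n → ℝ := fun k => Y⁻¹ k j with hw
  have hform : ∑ a, ∑ b, w a * Y a b * w b = w j := by
    have h1 : ∀ a, ∑ b, w a * Y a b * w b = w a * ((Y * Y⁻¹) a j) := by
      intro a
      rw [Matrix.mul_apply, Finset.mul_sum]
      congr 1; ext b; ring
    -- careful: ∑ b, w a * Y a b * w b  where w b = Y⁻¹ b j so Y a b * w b summed = (Y * Y⁻¹) a j
    rw [Finset.sum_congr rfl fun a _ => h1 a]
    rw [Matrix.mul_nonsing_inv Y hdet]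
    simp [Matrix.one_apply]
  have hkey := hq w
  rw [hform] at hkey
  set S : ℝ := ∑ k, w k ^ 2 with hS
  have hS0 : 0 ≤ S := Finset.sum_nonneg fun k _ => sq_nonneg _
  have hterm : w i ^ 2 ≤ S := Finset.single_le_sum (fun k _ => sq_nonneg (w k)) (Finset.mem_univ i)
  have htermj : w j ^ 2 ≤ S := Finset.single_le_sum (fun k _ => sq_nonneg (w k)) (Finset.mem_univ j)
  by_cases hS' : S = 0
  · have : w i ^ 2 = 0 := le_antisymm (hS' ▸ hterm) (sq_nonneg _)
    have : w i = 0 := by nlinarith [sq_nonneg (w i)]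
    have hgoal : |w i| ≤ 1 / ε := by rw [this]; simp; positivity
    exact hgoal
  · have hSpos : 0 < S := lt_of_le_of_ne hS0 (Ne.symm hS')
    have hsq : Real.sqrt S ^ 2 = S := Real.sq_sqrt hS0
    have h2 : w j ≤ Real.sqrt S := by
      nlinarith [Real.sqrt_nonneg S, abs_nonneg (w j), _root_.sq_abs (w j), le_abs_self (w j)]
    have h3 : ε * S ≤ Real.sqrt S := le_trans hkey h2
    have hsqrtpos : 0 < Real.sqrt S := Real.sqrt_pos.mpr hSpos
    have h4 : Real.sqrt S ≤ 1 / ε := by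
      rw [le_div_iff₀ hε]
      nlinarith
    have h5 : |w i| ≤ Real.sqrt S := by
      rw [← Real.sqrt_sq_eq_abs]
      exact Real.sqrt_le_sqrt hterm
    exact le_trans h5 h4

/-- If `Pᴴ (W - Wᴴ) P = V - Vᴴ`, `W` symmetric with a uniform lower bound on its imaginary
quadratic form, and the entries of `V` bounded by `R`, then columns of `P` are bounded. -/
lemma col_bound {n : ℕ} {ε R : ℝ} (hε : 0 < ε)
    (P V W : Matrix (Fin n) (Fin n) ℂ)
    (hkey : Pᴴ * (W - Wᴴ) * P = V - Vᴴ)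
    (hWq : ∀ x : Fin n → ℂ, ε * (∑ i, Complex.normSq (x i)) ≤
      (∑ i, ∑ k, (starRingEnd ℂ) (x i) * (((W i k).im : ℝ) : ℂ) * x k).re)
    (hWs : W.IsSymm)
    (hV : ∀ i j, ‖V i j‖ ≤ R) :
    ∀ i j, Complex.normSq (P i j) ≤ R / ε := by
  intro i j
  classical
  set e : Fin n → ℂ := Pi.single j 1 with he
  set x : Fin n → ℂ := P *ᵥ e with hx
  have hxe : ∀ k, x k = P k j := by
    intro k
    simp [hx, he, Matrix.mulVec_single]
  -- left side evaluated two ways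
  have hstar_e : star e = e := by
    ext k
    simp [he, Pi.single_apply, apply_ite]
  have lhs1 : star e ⬝ᵥ ((V - Vᴴ) *ᵥ e) = V j j - (starRingEnd ℂ) (V j j) := by
    rw [hstar_e]
    simp [he, Matrix.mulVec_single, single_dotProduct, Matrix.sub_apply,
      Matrix.conjTranspose_apply]
  have lhs2 : star e ⬝ᵥ ((Pᴴ * (W - Wᴴ) * P) *ᵥ e) = star x ⬝ᵥ ((W - Wᴴ) *ᵥ x) := by
    rw [Matrix.mul_assoc, ← Matrix.mulVec_mulVec, ← Matrix.mulVec_mulVec]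
    rw [Matrix.dotProduct_mulVec, ← Matrix.star_mulVec, hx]
  -- identify star x ⬝ᵥ ((W - Wᴴ) *ᵥ x) with (2i) * z
  set z : ℂ := ∑ a, ∑ b, (starRingEnd ℂ) (x a) * (((W a b).im : ℝ) : ℂ) * x b with hz
  have hWd : ∀ a b, (W - Wᴴ) a b = (2 * Complex.I) * (((W a b).im : ℝ) : ℂ) := by
    intro a b
    have hsym : W b a = W a b := by
      conv_lhs => rw [← hWs]
      rfl
    rw [Matrix.sub_apply, Matrix.conjTranspose_apply, hsym]
    rw [show star (W a b) = (starRingEnd ℂ) (W a b) from rfl]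
    rw [Complex.sub_conj]
    push_cast
    ring
  have hquad : star x ⬝ᵥ ((W - Wᴴ) *ᵥ x) = (2 * Complex.I) * z := by
    rw [hz]
    simp only [dotProduct, Matrix.mulVec, Pi.star_apply]
    rw [Finset.mul_sum]
    congr 1; ext a
    rw [Finset.mul_sum, Finset.mul_sum]
    congr 1; ext b
    rw [hWd a b]
    rw [show star (x a) = (starRingEnd ℂ) (x a) from rfl]
    ring
  have hzval : (2 * Complex.I) * z = V j j - (starRingEnd ℂ) (V j j) := by
    rw [← hquad, ← lhs2, hkey, lhs1]
  have hz_eq : z = (((V j j).im : ℝ) : ℂ) := by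
    have h2 : V j j - (starRingEnd ℂ) (V j j) = (2 * Complex.I) * (((V j j).im : ℝ) : ℂ) := by
      rw [Complex.sub_conj]; push_cast; ring
    rw [h2] at hzval
    have h2I : (2 * Complex.I) ≠ 0 := by simp [Complex.I_ne_zero]
    exact mul_left_cancel₀ h2I hzval
  have hzre : z.re = (V j j).im := by rw [hz_eq]; simp
  have hub : z.re ≤ R := by
    rw [hzre]
    calc (V j j).im ≤ |(V j j).im| := le_abs_self _
      _ ≤ ‖V j j‖ := Complex.abs_im_le_norm _
      _ ≤ R := hV j j
  have hlb := hWq x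
  rw [← hz] at hlb
  have hsum : ε * (∑ k, Complex.normSq (x k)) ≤ R := le_trans hlb hub
  have hone : Complex.normSq (x i) ≤ ∑ k, Complex.normSq (x k) :=
    Finset.single_le_sum (fun k _ => Complex.normSq_nonneg _) (Finset.mem_univ i)
  have : ε * Complex.normSq (x i) ≤ R :=
    le_trans (by nlinarith [Complex.normSq_nonneg (x i)]) hsum
  rw [← hxe i]
  rw [le_div_iff₀ hε]
  linarith [this]

lemma cmap_mul {n : ℕ} (M N : Matrix (Fin n) (Fin n) ℝ) :
    (M * N).map Complex.ofReal = M.map Complex.ofReal * N.map Complex.ofReal := by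
  ext i j
  simp [Matrix.mul_apply, Matrix.map_apply]

lemma cmap_one {n : ℕ} :
    ((1 : Matrix (Fin n) (Fin n) ℝ)).map Complex.ofReal = 1 := by
  ext i j
  simp [Matrix.one_apply, Matrix.map_apply, apply_ite]

lemma cmap_transpose {n : ℕ} (M : Matrix (Fin n) (Fin n) ℝ) :
    (Mᵀ).map Complex.ofReal = (M.map Complex.ofReal)ᵀ := by
  ext i j; simp [Matrix.map_apply]

lemma cmap_conjTranspose {n : ℕ} (M : Matrix (Fin n) (Fin n) ℝ) :
    (M.map Complex.ofReal)ᴴ = (Mᵀ).map Complex.ofReal := by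
  ext i j
  simp [Matrix.conjTranspose_apply, Matrix.map_apply, Complex.conj_ofReal]

lemma symp_relations {n : ℕ} (γ : Matrix (Fin n ⊕ Fin n) (Fin n ⊕ Fin n) ℝ)
    (hs : γᵀ * (fromBlocks 0 1 (-1) 0 : Matrix (Fin n ⊕ Fin n) (Fin n ⊕ Fin n) ℝ) * γ =
      (fromBlocks 0 1 (-1) 0 : Matrix (Fin n ⊕ Fin n) (Fin n ⊕ Fin n) ℝ)) :
    (γ.toBlocks₁₁)ᵀ * γ.toBlocks₂₁ = (γ.toBlocks₂₁)ᵀ * γ.toBlocks₁₁ ∧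
    (γ.toBlocks₁₁)ᵀ * γ.toBlocks₂₂ - (γ.toBlocks₂₁)ᵀ * γ.toBlocks₁₂ = 1 ∧
    (γ.toBlocks₂₂)ᵀ * γ.toBlocks₁₁ - (γ.toBlocks₁₂)ᵀ * γ.toBlocks₂₁ = 1 ∧
    (γ.toBlocks₁₂)ᵀ * γ.toBlocks₂₂ = (γ.toBlocks₂₂)ᵀ * γ.toBlocks₁₂ := by
  set A := γ.toBlocks₁₁
  set B := γ.toBlocks₁₂
  set C := γ.toBlocks₂₁
  set D := γ.toBlocks₂₂
  have hγb : γ = fromBlocks A B C D := (fromBlocks_toBlocks γ).symm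
  rw [hγb] at hs
  rw [fromBlocks_transpose, fromBlocks_multiply, fromBlocks_multiply] at hs
  simp only [Matrix.mul_zero, Matrix.zero_mul, Matrix.mul_one, Matrix.one_mul, Matrix.mul_neg,
    Matrix.neg_mul, add_zero, zero_add, Matrix.mul_assoc] at hs
  have e11 := congrArg Matrix.toBlocks₁₁ hs
  have e12 := congrArg Matrix.toBlocks₁₂ hs
  have e21 := congrArg Matrix.toBlocks₂₁ hs
  have e22 := congrArg Matrix.toBlocks₂₂ hs
  simp only [Matrix.toBlocks_fromBlocks₁₁, Matrix.toBlocks_fromBlocks₁₂,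
    Matrix.toBlocks_fromBlocks₂₁, Matrix.toBlocks_fromBlocks₂₂] at e11 e12 e21 e22
  refine ⟨?_, ?_, ?_, ?_⟩
  · have := e11
    linear_combination (norm := abel) this
  · linear_combination (norm := abel) e12
  · have : Dᵀ * A - Bᵀ * C = 1 := by linear_combination (norm := abel) -e21
    exact this
  · linear_combination (norm := abel) e22

lemma cmap_sub {n : ℕ} (M N : Matrix (Fin n) (Fin n) ℝ) :
    (M - N).map Complex.ofReal = M.map Complex.ofReal - N.map Complex.ofReal := by
  ext i j
  simp [Matrix.map_apply]

lemma key_identity {n : ℕ} (A B C D : Matrix (Fin n) (Fin n) ℝ) (Ω : Matrix (Fin n) (Fin n) ℂ)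
    (r1 : Aᵀ * C = Cᵀ * A) (r2 : Aᵀ * D - Cᵀ * B = 1) (r3 : Dᵀ * A - Bᵀ * C = 1)
    (r4 : Bᵀ * D = Dᵀ * B) :
    (C.map Complex.ofReal * Ω + D.map Complex.ofReal)ᴴ *
        (A.map Complex.ofReal * Ω + B.map Complex.ofReal) -
      (A.map Complex.ofReal * Ω + B.map Complex.ofReal)ᴴ *
        (C.map Complex.ofReal * Ω + D.map Complex.ofReal) = Ω - Ωᴴ := by
  set Ac := A.map Complex.ofReal with hAc
  set Bc := B.map Complex.ofReal with hBc
  set Cc := C.map Complex.ofReal with hCc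
  set Dc := D.map Complex.ofReal with hDc
  set Atc := (Aᵀ).map Complex.ofReal with hAtc
  set Btc := (Bᵀ).map Complex.ofReal with hBtc
  set Ctc := (Cᵀ).map Complex.ofReal with hCtc
  set Dtc := (Dᵀ).map Complex.ofReal with hDtc
  have cr1 : Ctc * Ac - Atc * Cc = 0 := by
    have h := congrArg (fun M => M.map Complex.ofReal) r1
    simp only [cmap_mul] at h
    rw [hCtc, hAc, hAtc, hCc]
    rw [← h]
    abel
  have cr2 : Ctc * Bc - Atc * Dc = -1 := by
    have h := congrArg (fun M => M.map Complex.ofReal) r2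
    simp only [cmap_sub, cmap_mul, cmap_one] at h
    rw [hCtc, hBc, hAtc, hDc]
    linear_combination (norm := abel) -h
  have cr3 : Dtc * Ac - Btc * Cc = 1 := by
    have h := congrArg (fun M => M.map Complex.ofReal) r3
    simp only [cmap_sub, cmap_mul, cmap_one] at h
    rw [hDtc, hAc, hBtc, hCc]
    linear_combination (norm := abel) h
  have cr4 : Dtc * Bc - Btc * Dc = 0 := by
    have h := congrArg (fun M => M.map Complex.ofReal) r4
    simp only [cmap_mul] at h
    rw [hDtc, hBc, hBtc, hDc]
    rw [← h]
    abel
  have hMH : (Cc * Ω + Dc)ᴴ = Ωᴴ * Ctc + Dtc := by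
    rw [conjTranspose_add, conjTranspose_mul, hCc, hDc, cmap_conjTranspose, cmap_conjTranspose]
  have hNH : (Ac * Ω + Bc)ᴴ = Ωᴴ * Atc + Btc := by
    rw [conjTranspose_add, conjTranspose_mul, hAc, hBc, cmap_conjTranspose, cmap_conjTranspose]
  calc (Cc * Ω + Dc)ᴴ * (Ac * Ω + Bc) - (Ac * Ω + Bc)ᴴ * (Cc * Ω + Dc)
      = (Ωᴴ * Ctc + Dtc) * (Ac * Ω + Bc) - (Ωᴴ * Atc + Btc) * (Cc * Ω + Dc) := by
        rw [hMH, hNH]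
    _ = Ωᴴ * (Ctc * Ac - Atc * Cc) * Ω + Ωᴴ * (Ctc * Bc - Atc * Dc) +
        (Dtc * Ac - Btc * Cc) * Ω + (Dtc * Bc - Btc * Dc) := by noncomm_ring
    _ = Ω - Ωᴴ := by
        rw [cr1, cr2, cr3, cr4]
        noncomm_ring

lemma sub_conj_quad {n : ℕ} (W : Matrix (Fin n) (Fin n) ℂ) (hWs : W.IsSymm) (x : Fin n → ℂ) :
    star x ⬝ᵥ ((W - Wᴴ) *ᵥ x) =
      (2 * Complex.I) * ∑ a, ∑ b, (starRingEnd ℂ) (x a) * (((W a b).im : ℝ) : ℂ) * x b := by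
  have hWd : ∀ a b, (W - Wᴴ) a b = (2 * Complex.I) * (((W a b).im : ℝ) : ℂ) := by
    intro a b
    have hsym : W b a = W a b := by
      conv_lhs => rw [← hWs]
      rfl
    rw [Matrix.sub_apply, Matrix.conjTranspose_apply, hsym]
    rw [show star (W a b) = (starRingEnd ℂ) (W a b) from rfl]
    rw [Complex.sub_conj]
    push_cast
    ring
  simp only [dotProduct, Matrix.mulVec, Pi.star_apply]
  rw [Finset.mul_sum]
  congr 1; ext a
  rw [Finset.mul_sum, Finset.mul_sum]
  congr 1; ext b
  rw [hWd a b]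
  rw [show star (x a) = (starRingEnd ℂ) (x a) from rfl]
  ring

/-- Recover real blocks `P`, `Q` from `M = Pℂ Ω + Qℂ` with entry bounds. -/
lemma block_recover {n : ℕ} {ε R cM : ℝ} (hε : 0 < ε) (hcM : 0 ≤ cM) (hR : 0 ≤ R)
    (P Q : Matrix (Fin n) (Fin n) ℝ)
    (Ω M : Matrix (Fin n) (Fin n) ℂ)
    (hM : M = P.map Complex.ofReal * Ω + Q.map Complex.ofReal)
    (hMbd : ∀ i j, ‖M i j‖ ≤ cM)
    (hΩbd : ∀ i j, ‖Ω i j‖ ≤ R)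
    (hq : ∀ v : Fin n → ℝ, ε * (∑ i, v i ^ 2) ≤ ∑ i, ∑ j, v i * (Ω i j).im * v j) :
    (∀ i j, |P i j| ≤ n * cM * (1 / ε)) ∧
    (∀ i j, |Q i j| ≤ cM + n * (n * cM * (1 / ε)) * R) := by
  classical
  set Y : Matrix (Fin n) (Fin n) ℝ := Matrix.of (fun i j => (Ω i j).im) with hY
  have hYq : ∀ v : Fin n → ℝ, ε * (∑ i, v i ^ 2) ≤ ∑ i, ∑ j, v i * Y i j * v j := hq
  have hYdet : IsUnit Y.det := by
    rw [isUnit_iff_ne_zero]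
    intro h0
    obtain ⟨v, hv0, hYv⟩ := (Matrix.exists_mulVec_eq_zero_iff).mpr h0
    have hz : ∑ i, ∑ j, v i * Y i j * v j = 0 := by
      have : ∀ i, ∑ j, v i * Y i j * v j = v i * (Y *ᵥ v) i := by
        intro i
        simp only [Matrix.mulVec, dotProduct, Finset.mul_sum]
        congr 1; ext j; ring
      rw [Finset.sum_congr rfl fun i _ => this i, hYv]
      simp
    have hkey := hYq v
    rw [hz] at hkey
    have hvpos : 0 < ∑ i, v i ^ 2 := by
      obtain ⟨i, hi⟩ := Function.ne_iff.mp hv0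
      have h1 : 0 < v i ^ 2 :=
        lt_of_le_of_ne (sq_nonneg _) (Ne.symm (pow_ne_zero 2 hi))
      have h2 : ∀ k ∈ Finset.univ, 0 ≤ v k ^ 2 := fun k _ => sq_nonneg _
      exact lt_of_lt_of_le h1 (Finset.single_le_sum h2 (Finset.mem_univ i))
    nlinarith
  have hYinv := inv_entry_bound hε Y hYq hYdet
  have hMim : ∀ i j, (M i j).im = ∑ k, P i k * Y k j := by
    intro i j
    rw [hM]
    simp only [Matrix.add_apply, Matrix.mul_apply, Matrix.map_apply, Complex.add_im,
      Complex.im_sum, Complex.mul_im, Complex.ofReal_im, Complex.ofReal_re, Complex.ofReal_im]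
    simp [hY]
  have hMre : ∀ i j, (M i j).re = (∑ k, P i k * (Ω k j).re) + Q i j := by
    intro i j
    rw [hM]
    simp only [Matrix.add_apply, Matrix.mul_apply, Matrix.map_apply, Complex.add_re,
      Complex.re_sum, Complex.mul_re, Complex.ofReal_im, Complex.ofReal_re]
    simp
  have hPY : (Matrix.of fun i j => (M i j).im) = P * Y := by
    ext i j
    rw [Matrix.mul_apply]
    exact hMim i j
  have hPf : ∀ i j, P i j = ∑ k, (M i k).im * Y⁻¹ k j := by
    intro i j
    have hP : P = (Matrix.of fun i j => (M i j).im) * Y⁻¹ := by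
      calc P = P * 1 := (Matrix.mul_one P).symm
        _ = P * (Y * Y⁻¹) := by rw [Matrix.mul_nonsing_inv Y hYdet]
        _ = (P * Y) * Y⁻¹ := by rw [Matrix.mul_assoc]
        _ = (Matrix.of fun i j => (M i j).im) * Y⁻¹ := by rw [hPY]
    conv_lhs => rw [hP]
    rw [Matrix.mul_apply]
    rfl
  have hPbd : ∀ i j, |P i j| ≤ n * cM * (1 / ε) := by
    intro i j
    rw [hPf i j]
    calc |∑ k, (M i k).im * Y⁻¹ k j| ≤ ∑ k, |(M i k).im * Y⁻¹ k j| :=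
          Finset.abs_sum_le_sum_abs _ _
      _ ≤ ∑ _k : Fin n, cM * (1 / ε) := by
          apply Finset.sum_le_sum
          intro k _
          rw [abs_mul]
          apply mul_le_mul _ (hYinv k j) (abs_nonneg _) hcM
          exact le_trans (Complex.abs_im_le_norm _) (hMbd i k)
      _ = n * cM * (1 / ε) := by
          rw [Finset.sum_const, Finset.card_univ, Fintype.card_fin]
          push_cast
          ring
  refine ⟨hPbd, fun i j => ?_⟩
  have hQf : Q i j = (M i j).re - ∑ k, P i k * (Ω k j).re := by
    rw [hMre i j]; ring
  rw [hQf]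
  have h1 : |(M i j).re| ≤ cM := le_trans (Complex.abs_re_le_norm _) (hMbd i j)
  have h2 : |∑ k, P i k * (Ω k j).re| ≤ n * (n * cM * (1 / ε)) * R := by
    calc |∑ k, P i k * (Ω k j).re| ≤ ∑ k, |P i k * (Ω k j).re| := Finset.abs_sum_le_sum_abs _ _
      _ ≤ ∑ _k : Fin n, (n * cM * (1 / ε)) * R := by
          apply Finset.sum_le_sum
          intro k _
          rw [abs_mul]
          apply mul_le_mul (hPbd i k) _ (abs_nonneg _) (by positivity)
          exact le_trans (Complex.abs_re_le_norm _) (hΩbd k j)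
      _ = n * (n * cM * (1 / ε)) * R := by
          rw [Finset.sum_const, Finset.card_univ, Fintype.card_fin]
          push_cast
          ring
  calc |(M i j).re - ∑ k, P i k * (Ω k j).re|
      ≤ |(M i j).re| + |∑ k, P i k * (Ω k j).re| := abs_sub _ _
    _ ≤ cM + n * (n * cM * (1 / ε)) * R := add_le_add h1 h2

/-- A discrete subgroup of `Sp(n,ℝ)` acts properly discontinuously on the Siegel upper half
plane `H_n`: for compact `C₁, C₂ ⊆ H_n`, only finitely many `γ ∈ Γ` satisfy
`(γ·C₁) ∩ C₂ ≠ ∅`. -/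
theorem stmt13 {n : ℕ} (Γ : Set (Matrix (Fin n ⊕ Fin n) (Fin n ⊕ Fin n) ℝ))
    (hsymp : ∀ γ ∈ Γ, γᵀ *
        (fromBlocks 0 1 (-1) 0 : Matrix (Fin n ⊕ Fin n) (Fin n ⊕ Fin n) ℝ) * γ =
      (fromBlocks 0 1 (-1) 0 : Matrix (Fin n ⊕ Fin n) (Fin n ⊕ Fin n) ℝ))
    (hone : (1 : Matrix (Fin n ⊕ Fin n) (Fin n ⊕ Fin n) ℝ) ∈ Γ)
    (hmul : ∀ γ₁ ∈ Γ, ∀ γ₂ ∈ Γ, γ₁ * γ₂ ∈ Γ)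
    (hinv : ∀ γ ∈ Γ, γ⁻¹ ∈ Γ)
    (hdiscrete : ∀ K : Set (Matrix (Fin n ⊕ Fin n) (Fin n ⊕ Fin n) ℝ),
      IsCompact K → (Γ ∩ K).Finite)
    (C₁ C₂ : Set (Matrix (Fin n) (Fin n) ℂ))
    (hC₁H : ∀ Ω ∈ C₁, Ω.IsSymm ∧ (Matrix.of fun i j => (Ω i j).im).PosDef)
    (hC₂H : ∀ Ω ∈ C₂, Ω.IsSymm ∧ (Matrix.of fun i j => (Ω i j).im).PosDef)
    (hC₁ : IsCompact C₁) (hC₂ : IsCompact C₂) :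
    {γ ∈ Γ | ∃ Ω ∈ C₁,
      ((γ.toBlocks₁₁).map Complex.ofReal * Ω + (γ.toBlocks₁₂).map Complex.ofReal) *
        ((γ.toBlocks₂₁).map Complex.ofReal * Ω + (γ.toBlocks₂₂).map Complex.ofReal)⁻¹
          ∈ C₂}.Finite := by
  classical
  rcases Nat.eq_zero_or_pos n with hn0 | hn
  · subst hn0
    apply Set.Subsingleton.finite
    intro a _ b _
    ext i j
    rcases i with x | x <;> exact x.elim0
  rcases Set.eq_empty_or_nonempty {γ ∈ Γ | ∃ Ω ∈ C₁,
      ((γ.toBlocks₁₁).map Complex.ofReal * Ω + (γ.toBlocks₁₂).map Complex.ofReal) *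
        ((γ.toBlocks₂₁).map Complex.ofReal * Ω + (γ.toBlocks₂₂).map Complex.ofReal)⁻¹
          ∈ C₂} with hSe | hSne
  · rw [hSe]; exact Set.finite_empty
  obtain ⟨γ₀, hγ₀Γ, Ω₀, hΩ₀, hγ₀Ω⟩ := hSne
  have hUcomp : IsCompact (C₁ ∪ C₂) := hC₁.union hC₂
  obtain ⟨R, hRpos, hR⟩ := entry_bound (C₁ ∪ C₂) hUcomp
  have hUH : ∀ Ω ∈ C₁ ∪ C₂, (Matrix.of fun i j => (Ω i j).im).PosDef := by
    intro Ω hΩ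
    rcases hΩ with h | h
    · exact (hC₁H Ω h).2
    · exact (hC₂H Ω h).2
  obtain ⟨ε, hεpos, hε⟩ := eps_bound hn (C₁ ∪ C₂) hUcomp ⟨Ω₀, Or.inl hΩ₀⟩ hUH
  set c1 : ℝ := Real.sqrt (R / ε) with hc1def
  have hc1 : 0 ≤ c1 := Real.sqrt_nonneg _
  set bC : ℝ := (n : ℝ) * c1 * (1 / ε) with hbC
  set bD : ℝ := c1 + (n : ℝ) * bC * R with hbD
  set bN : ℝ := (n : ℝ) * R * c1 with hbN
  have hbNnn : 0 ≤ bN := by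
    rw [hbN]; positivity
  set bA : ℝ := (n : ℝ) * bN * (1 / ε) with hbA
  set bB : ℝ := bN + (n : ℝ) * bA * R with hbB
  set K₀ : ℝ := max (max bA bB) (max bC bD) with hK₀
  have hbAK : bA ≤ K₀ := le_trans (le_max_left bA bB) (le_max_left _ _)
  have hbBK : bB ≤ K₀ := le_trans (le_max_right bA bB) (le_max_left _ _)
  have hbCK : bC ≤ K₀ := le_trans (le_max_left bC bD) (le_max_right _ _)
  have hbDK : bD ≤ K₀ := le_trans (le_max_right bC bD) (le_max_right _ _)
  apply Set.Finite.subset (hdiscrete {g | ∀ i j, |g i j| ≤ K₀} (box_compact K₀))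
  rintro γ ⟨hγΓ, Ω, hΩ₁, hΩ'₂⟩
  refine ⟨hγΓ, ?_⟩
  obtain ⟨hΩsym, hΩpos⟩ := hC₁H Ω hΩ₁
  obtain ⟨r1, r2, r3, r4⟩ := symp_relations γ (hsymp γ hγΓ)
  set gA := γ.toBlocks₁₁ with hgA
  set gB := γ.toBlocks₁₂ with hgB
  set gC := γ.toBlocks₂₁ with hgC
  set gD := γ.toBlocks₂₂ with hgD
  set M : Matrix (Fin n) (Fin n) ℂ :=
    gC.map Complex.ofReal * Ω + gD.map Complex.ofReal with hM
  set N : Matrix (Fin n) (Fin n) ℂ :=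
    gA.map Complex.ofReal * Ω + gB.map Complex.ofReal with hN
  have key1 : Mᴴ * N - Nᴴ * M = Ω - Ωᴴ := key_identity gA gB gC gD Ω r1 r2 r3 r4
  have hdet : IsUnit M.det := by
    rw [isUnit_iff_ne_zero]
    intro h0
    obtain ⟨v, hv0, hMv⟩ := (Matrix.exists_mulVec_eq_zero_iff).mpr h0
    have hq1 : star v ⬝ᵥ ((Mᴴ * N - Nᴴ * M) *ᵥ v) = 0 := by
      rw [Matrix.sub_mulVec, dotProduct_sub]
      have e1 : star v ⬝ᵥ ((Mᴴ * N) *ᵥ v) = 0 := by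
        rw [← Matrix.mulVec_mulVec, Matrix.dotProduct_mulVec, ← Matrix.star_mulVec, hMv]
        simp
      have e2 : star v ⬝ᵥ ((Nᴴ * M) *ᵥ v) = 0 := by
        rw [← Matrix.mulVec_mulVec, hMv]
        simp
      rw [e1, e2, sub_zero]
    rw [key1, sub_conj_quad Ω hΩsym v] at hq1
    have h2I : (2 * Complex.I) ≠ 0 := by simp [Complex.I_ne_zero]
    have hzero : (∑ a, ∑ b, (starRingEnd ℂ) (v a) * (((Ω a b).im : ℝ) : ℂ) * v b) = 0 :=
      (mul_eq_zero.mp hq1).resolve_left h2I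
    have hlb := quad_complex (fun w => hε Ω (Or.inl hΩ₁) w) v
    rw [hzero] at hlb
    simp only [Complex.zero_re] at hlb
    have hvpos : 0 < ∑ i, Complex.normSq (v i) := by
      obtain ⟨i, hi⟩ := Function.ne_iff.mp hv0
      have h1 : 0 < Complex.normSq (v i) := Complex.normSq_pos.mpr hi
      exact lt_of_lt_of_le h1
        (Finset.single_le_sum (fun k _ => Complex.normSq_nonneg _) (Finset.mem_univ i))
    nlinarith
  set Ω' : Matrix (Fin n) (Fin n) ℂ := N * M⁻¹ with hΩ'def
  obtain ⟨hΩ'sym, hΩ'pos⟩ := hC₂H Ω' hΩ'₂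
  have hNM : Ω' * M = N := by
    rw [hΩ'def, Matrix.mul_assoc, Matrix.nonsing_inv_mul M hdet, Matrix.mul_one]
  have key2 : Mᴴ * (Ω' - Ω'ᴴ) * M = Ω - Ωᴴ := by
    have h1 : Mᴴ * (Ω' - Ω'ᴴ) * M = Mᴴ * N - Nᴴ * M := by
      conv_rhs => rw [← hNM, conjTranspose_mul]
      noncomm_ring
    rw [h1, key1]
  have hΩ'q : ∀ x : Fin n → ℂ, ε * (∑ i, Complex.normSq (x i)) ≤
      (∑ i, ∑ k, (starRingEnd ℂ) (x i) * (((Ω' i k).im : ℝ) : ℂ) * x k).re :=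
    fun x => quad_complex (fun w => hε Ω' (Or.inr hΩ'₂) w) x
  have hMn : ∀ i j, Complex.normSq (M i j) ≤ R / ε :=
    col_bound hεpos M Ω Ω' key2 hΩ'q hΩ'sym (fun i j => hR Ω (Or.inl hΩ₁) i j)
  have hMabs : ∀ i j, ‖M i j‖ ≤ c1 := by
    intro i j
    rw [Complex.norm_def, hc1def]
    exact Real.sqrt_le_sqrt (hMn i j)
  have hNabs : ∀ i j, ‖N i j‖ ≤ bN := by
    intro i j
    rw [← hNM, hbN]
    rw [Matrix.mul_apply]
    calc ‖∑ k, Ω' i k * M k j‖ ≤ ∑ k, ‖Ω' i k * M k j‖ :=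
          norm_sum_le _ _
      _ ≤ ∑ _k : Fin n, R * c1 := by
          apply Finset.sum_le_sum
          intro k _
          rw [norm_mul]
          exact mul_le_mul (hR Ω' (Or.inr hΩ'₂) i k) (hMabs k j)
            (norm_nonneg _) (le_of_lt hRpos)
      _ = (n : ℝ) * R * c1 := by
          rw [Finset.sum_const, Finset.card_univ, Fintype.card_fin]
          push_cast
          ring
  have hrecCD := block_recover hεpos hc1 (le_of_lt hRpos) gC gD Ω M hM hMabs
    (fun i j => hR Ω (Or.inl hΩ₁) i j) (fun w => hε Ω (Or.inl hΩ₁) w)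
  have hrecAB := block_recover hεpos hbNnn (le_of_lt hRpos) gA gB Ω N hN hNabs
    (fun i j => hR Ω (Or.inl hΩ₁) i j) (fun w => hε Ω (Or.inl hΩ₁) w)
  have hAK : ∀ i j, |gA i j| ≤ K₀ := by
    intro i j
    refine le_trans (hrecAB.1 i j) ?_
    rw [hbA] at hbAK
    exact hbAK
  have hBK : ∀ i j, |gB i j| ≤ K₀ := by
    intro i j
    refine le_trans (hrecAB.2 i j) ?_
    rw [hbB, hbA] at hbBK
    exact hbBK
  have hCK : ∀ i j, |gC i j| ≤ K₀ := by
    intro i j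
    refine le_trans (hrecCD.1 i j) ?_
    rw [hbC] at hbCK
    exact hbCK
  have hDK : ∀ i j, |gD i j| ≤ K₀ := by
    intro i j
    refine le_trans (hrecCD.2 i j) ?_
    rw [hbD, hbC] at hbDK
    exact hbDK
  intro p q
  rcases p with i | i <;> rcases q with j | j
  · exact hAK i j
  · exact hBK i j
  · exact hCK i j
  · exact hDK i j
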